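/- Let F : C ⥤ D be a discrete opfibration. Then F is injective on objects and on morphisms if and only if F is faithful and full on isomorphisms (i.e., every isomorphism F(c) ≅ F(c') in D is the image of an isomorphism c ≅ c' in C). -/
import Mathlib


open CategoryTheory

/-- A functor `P` is a discrete opfibration if every morphism out of the image of an
object `x` has a unique lift with domain `x`. -/
def IsDiscreteOpfibration {E B : Type*} [Category E] [Category B] (P : E ⥤ B) : Prop :=
  ∀ ⦃e : E⦄ ⦃b : B⦄ (u : P.obj e ⟶ b),
    ∃! p : (y : E) × (e ⟶ y), ∃ h : P.obj p.1 = b, P.map p.2 = u ≫ eqToHom h.symm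

/-- For a discrete opfibration `F`, injectivity on objects and morphisms is equivalent to
being faithful and full on isomorphisms. -/
theorem dof_injective_iff_faithful_and_full_on_isos
    {C D : Type*} [Category C] [Category D] (F : C ⥤ D)
    (hF : IsDiscreteOpfibration F) :
    (Function.Injective F.obj ∧
      Function.Injective
        (fun p : (c : C) × (c' : C) × (c ⟶ c') =>
          (⟨F.obj p.1, F.obj p.2.1, F.map p.2.2⟩ : (d : D) × (d' : D) × (d ⟶ d')))) ↔
    ((∀ ⦃c c' : C⦄ (f g : c ⟶ c'), F.map f = F.map g → f = g) ∧
      (∀ (c c' : C) (e : F.obj c ≅ F.obj c'), ∃ e' : c ≅ c', F.mapIso e' = e)) := by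
  constructor
  · rintro ⟨hobj, hmor⟩
    constructor
    · intro c c' f g h
      have h2 := hmor (a₁ := ⟨c, c', f⟩) (a₂ := ⟨c, c', g⟩) (by simp [h])
      obtain ⟨-, h2⟩ := Sigma.mk.inj_iff.mp h2
      obtain ⟨-, h2⟩ := Sigma.mk.inj_iff.mp (eq_of_heq h2)
      exact eq_of_heq h2
    · intro c c' e
      obtain ⟨⟨y, u⟩, ⟨hy, hu⟩, -⟩ := hF e.hom
      have hy' : y = c' := hobj hy
      subst y
      have hu' : F.map u = e.hom := by simpa using hu
      obtain ⟨⟨z, v⟩, ⟨hz, hv⟩, -⟩ := hF e.inv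
      have hz' : z = c := hobj hz
      subst z
      have hv' : F.map v = e.inv := by simpa using hv
      have huv : u ≫ v = 𝟙 c := by
        obtain ⟨⟨w, i⟩, -, hiuniq⟩ := hF (𝟙 (F.obj c))
        have h1 := hiuniq ⟨c, u ≫ v⟩ ⟨rfl, by simp [hu', hv']⟩
        have h2 := hiuniq ⟨c, 𝟙 c⟩ ⟨rfl, by simp⟩
        have h3 := h1.trans h2.symm
        obtain ⟨-, h3⟩ := Sigma.mk.inj_iff.mp h3
        exact eq_of_heq h3
      have hvu : v ≫ u = 𝟙 c' := by
        obtain ⟨⟨w, i⟩, -, hiuniq⟩ := hF (𝟙 (F.obj c'))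
        have h1 := hiuniq ⟨c', v ≫ u⟩ ⟨rfl, by simp [hu', hv']⟩
        have h2 := hiuniq ⟨c', 𝟙 c'⟩ ⟨rfl, by simp⟩
        have h3 := h1.trans h2.symm
        obtain ⟨-, h3⟩ := Sigma.mk.inj_iff.mp h3
        exact eq_of_heq h3
      exact ⟨⟨u, v, huv, hvu⟩, Iso.ext hu'⟩
  · rintro ⟨hfaith, hfull⟩
    have hobj : Function.Injective F.obj := by
      intro c c' h
      obtain ⟨e', he'⟩ := hfull c c' (eqToIso h)
      obtain ⟨⟨w, i⟩, -, hiuniq⟩ := hF (𝟙 (F.obj c))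
      have h1 := hiuniq ⟨c, 𝟙 c⟩ ⟨rfl, by simp⟩
      have h2 := hiuniq ⟨c', e'.hom⟩ ⟨h.symm, by
        have hh : F.map e'.hom = eqToHom h := congrArg Iso.hom he'
        simp [hh]⟩
      exact (Sigma.mk.inj_iff.mp (h1.trans h2.symm)).1
    refine ⟨hobj, ?_⟩
    rintro ⟨c, c', f⟩ ⟨d, d', g⟩ h
    obtain ⟨h1, h2⟩ := Sigma.mk.inj_iff.mp h
    have hcd : c = d := hobj h1
    subst hcd
    obtain ⟨h3, h4⟩ := Sigma.mk.inj_iff.mp (eq_of_heq h2)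
    have hcd' : c' = d' := hobj h3
    subst hcd'
    have hfg : f = g := hfaith f g (eq_of_heq h4)
    subst hfg
    rfl
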